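/- In a 2-connected distance critical simple graph, every vertex is contained in a cycle of length at least 5. -/

import Mathlib

/-- A graph is *distance critical* if for every vertex `v` there is a pair of vertices of
`G − v` whose distance in `G − v` differs from their distance in `G`
(distances are `ℕ∞`-valued, `⊤` when there is no connecting path). -/
def IsDistanceCritical {V : Type*} (G : SimpleGraph V) : Prop :=
  ∀ v : V, ∃ x y : ({v}ᶜ : Set V),
    (G.induce ({v}ᶜ : Set V)).edist x y ≠ G.edist (x : V) (y : V)

/-- A walk whose support lies in `s` lifts to the induced graph on `s`. -/
lemma lift_walk_aux {V : Type*} {G : SimpleGraph V} {s : Set V} :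
    ∀ {a b : V} (w : G.Walk a b) (_ : ∀ x ∈ w.support, x ∈ s)
    (ha : a ∈ s) (hb : b ∈ s),
    ∃ w' : (G.induce s).Walk ⟨a, ha⟩ ⟨b, hb⟩, w'.length = w.length := by
  intro a b w
  induction w with
  | nil => intro _ ha hb; exact ⟨SimpleGraph.Walk.nil, rfl⟩
  | @cons a c b h p ih =>
    intro hs ha hb
    have hc : c ∈ s := hs c (by simp)
    obtain ⟨w', hw'⟩ := ih (fun x hx => hs x (by simp [hx])) hc hb
    exact ⟨SimpleGraph.Walk.cons (by exact h) w', by exact congrArg (· + 1) hw'⟩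

theorem stmt_4 {V : Type*} [Fintype V] (G : SimpleGraph V)
    (hconn : G.Connected) (hcard : 2 < Fintype.card V)
    (h2conn : ∀ v : V, (G.induce ({v}ᶜ : Set V)).Connected)
    (hG : IsDistanceCritical G) :
    ∀ v : V, ∃ (u : V) (c : G.Walk u u), c.IsCycle ∧ 5 ≤ c.length ∧ v ∈ c.support := by
  intro v
  classical
  set s : Set V := {v}ᶜ with hs_def
  set H : SimpleGraph s := G.induce s with hH_def
  have hconnH : H.Connected := h2conn v
  have hmem_s : ∀ x : V, x ∈ s ↔ x ≠ v := by
    intro x; simp [hs_def]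
  -- distance in G is at most distance in G - v
  have hmono : ∀ a b : s, G.dist (a : V) (b : V) ≤ H.dist a b := by
    intro a b
    obtain ⟨w, hw⟩ := hconnH.exists_walk_length_eq_dist a b
    calc G.dist (a : V) (b : V)
        ≤ (w.map (SimpleGraph.Embedding.induce s).toHom).length := SimpleGraph.dist_le _
      _ = H.dist a b := by rw [SimpleGraph.Walk.length_map, hw]
  -- the distance-critical pair, in ℕ form
  have hex : ∃ n, ∃ a b : s, H.dist a b ≠ G.dist (a : V) (b : V) ∧ H.dist a b = n := by
    obtain ⟨x, y, hxy⟩ := hG v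
    refine ⟨H.dist x y, x, y, ?_, rfl⟩
    intro h
    apply hxy
    have e1 : ((H.dist x y : ℕ) : ℕ∞) = H.edist x y :=
      ENat.coe_toNat (SimpleGraph.edist_ne_top_iff_reachable.2 (hconnH x y))
    have e2 : ((G.dist (x : V) (y : V) : ℕ) : ℕ∞) = G.edist (x : V) (y : V) :=
      ENat.coe_toNat (SimpleGraph.edist_ne_top_iff_reachable.2 (hconn (x : V) (y : V)))
    rw [← e1, ← e2]
    exact_mod_cast h
  obtain ⟨a, b, hne, hdba⟩ := Nat.find_spec hex
  have hlt : G.dist (a : V) (b : V) < H.dist a b :=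
    lt_of_le_of_ne (hmono a b) (Ne.symm hne)
  have hab : (a : V) ≠ (b : V) := by
    intro h
    have : a = b := Subtype.ext h
    subst this
    simp [SimpleGraph.dist_self] at hlt
  have hav : (a : V) ≠ v := (hmem_s _).1 a.2
  have hbv : (b : V) ≠ v := (hmem_s _).1 b.2
  -- shortest path P in G
  obtain ⟨P, hPp, hPl⟩ := hconn.exists_path_of_dist (a : V) (b : V)
  have hvP : v ∈ P.support := by
    by_contra hvP
    have hsub : ∀ x ∈ P.support, x ∈ s := by
      intro x hx
      rw [hmem_s]
      rintro rfl
      exact hvP hx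
    obtain ⟨W, hW⟩ := lift_walk_aux P hsub a.2 b.2
    have h1 : H.dist a b ≤ W.length := SimpleGraph.dist_le W
    omega
  -- shortest path Q in G - v, pushed to G
  obtain ⟨Q₀, hQ₀p, hQ₀l⟩ := hconnH.exists_path_of_dist a b
  set Q : G.Walk (a : V) (b : V) := Q₀.map (SimpleGraph.Embedding.induce s).toHom with hQ_def
  have hQp : Q.IsPath :=
    SimpleGraph.Walk.map_isPath_of_injective (SimpleGraph.Embedding.induce (G := G) s).injective hQ₀p
  have hQl : Q.length = H.dist a b := by
    rw [hQ_def]; exact (SimpleGraph.Walk.length_map _ _).trans hQ₀l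
  have hQs : ∀ x ∈ Q.support, x ∈ s := by
    intro x hx
    replace hx : x ∈ Q₀.support.map (SimpleGraph.Embedding.induce (G := G) s).toHom := by
      rw [← SimpleGraph.Walk.support_map]; exact hx
    obtain ⟨q, -, rfl⟩ := List.mem_map.1 hx
    exact q.2
  have hvQ : v ∉ Q.support := by
    intro h
    exact ((hmem_s v).1 (hQs v h)) rfl
  -- key disjointness : P and Q meet only in a and b
  have hkey : ∀ w, w ∈ P.support → w ∈ Q.support → w = (a : V) ∨ w = (b : V) := by
    intro w hwP hwQ
    by_contra hcon
    push_neg at hcon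
    obtain ⟨hwa, hwb⟩ := hcon
    have hws : w ∈ s := hQs w hwQ
    -- split Q at w
    have hQsplit : (Q.takeUntil w hwQ).length + (Q.dropUntil w hwQ).length = H.dist a b := by
      have h1 := congrArg SimpleGraph.Walk.length (Q.take_spec hwQ)
      rw [SimpleGraph.Walk.length_append] at h1
      omega
    obtain ⟨W1, hW1⟩ := lift_walk_aux (Q.takeUntil w hwQ)
      (fun x hx => hQs x (Q.support_takeUntil_subset hwQ hx)) a.2 hws
    obtain ⟨W2, hW2⟩ := lift_walk_aux (Q.dropUntil w hwQ)
      (fun x hx => hQs x (Q.support_dropUntil_subset hwQ hx)) hws b.2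
    have hH1 : H.dist a ⟨w, hws⟩ ≤ (Q.takeUntil w hwQ).length := by
      rw [← hW1]; exact SimpleGraph.dist_le W1
    have hH2 : H.dist ⟨w, hws⟩ b ≤ (Q.dropUntil w hwQ).length := by
      rw [← hW2]; exact SimpleGraph.dist_le W2
    have htriH : H.dist a b ≤ H.dist a ⟨w, hws⟩ + H.dist ⟨w, hws⟩ b :=
      hconnH.dist_triangle
    -- split P at w
    have hPsplit : (P.takeUntil w hwP).length + (P.dropUntil w hwP).length
        = G.dist (a : V) (b : V) := by
      have h1 := congrArg SimpleGraph.Walk.length (P.take_spec hwP)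
      rw [SimpleGraph.Walk.length_append] at h1
      omega
    have hG1 : G.dist (a : V) w ≤ (P.takeUntil w hwP).length := SimpleGraph.dist_le _
    have hG2 : G.dist w (b : V) ≤ (P.dropUntil w hwP).length := SimpleGraph.dist_le _
    have htriG : G.dist (a : V) (b : V) ≤ G.dist (a : V) w + G.dist w (b : V) :=
      hconn.dist_triangle
    -- monotonicity for the sub-pairs
    have hm1 : G.dist (a : V) w ≤ H.dist a ⟨w, hws⟩ := hmono a ⟨w, hws⟩
    have hm2 : G.dist w (b : V) ≤ H.dist ⟨w, hws⟩ b := hmono ⟨w, hws⟩ b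
    -- positivity
    have hp1 : 1 ≤ H.dist a ⟨w, hws⟩ := by
      have : a ≠ ⟨w, hws⟩ := by
        intro h; exact hwa (by rw [h])
      exact hconnH.pos_dist_of_ne this
    have hp2 : 1 ≤ H.dist ⟨w, hws⟩ b := by
      have : (⟨w, hws⟩ : s) ≠ b := by
        intro h; exact hwb (by rw [← h])
      exact hconnH.pos_dist_of_ne this
    -- minimality contradiction
    rcases lt_or_ge (G.dist (a : V) w) (H.dist a ⟨w, hws⟩) with hcase | hcase
    · exact Nat.find_min hex (by omega)
        ⟨a, ⟨w, hws⟩, show H.dist a ⟨w, hws⟩ ≠ G.dist (a : V) w by omega, rfl⟩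
    · have hcase2 : G.dist w (b : V) < H.dist ⟨w, hws⟩ b := by omega
      exact Nat.find_min hex (by omega)
        ⟨⟨w, hws⟩, b, show H.dist ⟨w, hws⟩ b ≠ G.dist w (b : V) by omega, rfl⟩
  -- G.dist a b ≥ 2
  have hd2 : 2 ≤ G.dist (a : V) (b : V) := by
    have hPnodup := hPp.support_nodup
    have hsubF : ({(a : V), (b : V), v} : Finset V) ⊆ P.support.toFinset := by
      intro x hx
      rw [List.mem_toFinset]
      simp only [Finset.mem_insert, Finset.mem_singleton] at hx
      rcases hx with rfl | rfl | rfl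
      · exact P.start_mem_support
      · exact P.end_mem_support
      · exact hvP
    have hcard3 : ({(a : V), (b : V), v} : Finset V).card = 3 := by
      rw [Finset.card_eq_three]
      exact ⟨_, _, _, hab, hav, hbv, rfl⟩
    have hle := Finset.card_le_card hsubF
    rw [List.toFinset_card_of_nodup hPnodup] at hle
    have hsl : P.support.length = P.length + 1 := SimpleGraph.Walk.length_support P
    omega
  -- no a-b edge
  have hnadj : ¬ G.Adj (a : V) (b : V) := by
    intro h
    have := SimpleGraph.dist_eq_one_iff_adj.2 h
    omega
  -- edges of P and Q are disjoint
  have hedge : ∀ e, e ∈ P.edges → e ∉ Q.edges := by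
    intro e
    induction e using Sym2.ind with
    | _ x y =>
      intro heP heQ
      have hadj : G.Adj x y := P.edges_subset_edgeSet heP
      have hxP := SimpleGraph.Walk.fst_mem_support_of_mem_edges P heP
      have hyP := SimpleGraph.Walk.snd_mem_support_of_mem_edges P heP
      have hxQ := SimpleGraph.Walk.fst_mem_support_of_mem_edges Q heQ
      have hyQ := SimpleGraph.Walk.snd_mem_support_of_mem_edges Q heQ
      rcases hkey x hxP hxQ with rfl | rfl <;> rcases hkey y hyP hyQ with rfl | rfl
      · exact hadj.ne rfl
      · exact hnadj hadj
      · exact hnadj hadj.symm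
      · exact hadj.ne rfl
  -- the cycle
  set C : G.Walk (a : V) (a : V) := P.append Q.reverse with hC_def
  have hClen : C.length = G.dist (a : V) (b : V) + H.dist a b := by
    rw [hC_def, SimpleGraph.Walk.length_append, SimpleGraph.Walk.length_reverse]
    omega
  have htrail : C.IsTrail := by
    constructor
    rw [hC_def, SimpleGraph.Walk.edges_append]
    refine List.Nodup.append hPp.isTrail.edges_nodup hQp.reverse.isTrail.edges_nodup ?_
    intro e heP heQ
    rw [SimpleGraph.Walk.edges_reverse, List.mem_reverse] at heQ
    exact hedge e heP heQ
  have hne_nil : C ≠ SimpleGraph.Walk.nil := by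
    intro h
    have : C.length = 0 := by rw [h]; rfl
    omega
  have htail : C.support.tail.Nodup := by
    have hCt : C.support.tail = P.support.tail ++ Q.reverse.support.tail := by
      conv_lhs => rw [hC_def, SimpleGraph.Walk.support_append, SimpleGraph.Walk.support_eq_cons P]
      simp
    rw [hCt]
    have hPn := hPp.support_nodup
    have hQn := hQp.reverse.support_nodup
    refine List.Nodup.append hPn.tail hQn.tail ?_
    intro x hx1 hx2
    have hPcons : P.support = (a : V) :: P.support.tail := SimpleGraph.Walk.support_eq_cons P
    have hQcons : Q.reverse.support = (b : V) :: Q.reverse.support.tail :=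
      SimpleGraph.Walk.support_eq_cons Q.reverse
    have hxa : x ≠ (a : V) := by
      rintro rfl
      rw [hPcons] at hPn
      exact (List.nodup_cons.1 hPn).1 hx1
    have hxb : x ≠ (b : V) := by
      rintro rfl
      rw [hQcons] at hQn
      exact (List.nodup_cons.1 hQn).1 hx2
    have hxP : x ∈ P.support := by
      rw [hPcons]; exact List.mem_cons_of_mem _ hx1
    have hxQ : x ∈ Q.support := by
      have : x ∈ Q.reverse.support := by
        rw [hQcons]; exact List.mem_cons_of_mem _ hx2
      rwa [SimpleGraph.Walk.support_reverse, List.mem_reverse] at this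
    rcases hkey x hxP hxQ with h | h
    · exact hxa h
    · exact hxb h
  have hcyc : C.IsCycle := by
    rw [SimpleGraph.Walk.isCycle_def]
    exact ⟨htrail, hne_nil, htail⟩
  refine ⟨(a : V), C, hcyc, by omega, ?_⟩
  rw [hC_def, SimpleGraph.Walk.mem_support_append_iff]
  exact Or.inl hvP
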